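/- Let A, C ∈ ℝ^{n×n} and let W ∈ ℝ^{n×n} be symmetric positive semidefinite. For a symmetric positive semidefinite matrix X₀ define the sequence X_{k+1} = A X_k Aᵀ + C X_k Cᵀ + W. Then there exists a symmetric positive semidefinite matrix X such that, for every symmetric positive semidefinite initial matrix X₀, the sequence (X_k) converges to X (in particular the limit is independent of X₀), if and only if the spectral radius of A⊗A + C⊗C is strictly less than 1. -/

import Mathlib

open Matrix Kronecker Filter Topology
open scoped ENNReal NNReal

/-- The spectral radius of a real square matrix: the maximum modulus of its
complex eigenvalues. -/
noncomputable def specRad {ι : Type*} [Fintype ι] [DecidableEq ι]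
    (M : Matrix ι ι ℝ) : ℝ :=
  sSup ((fun μ : ℂ => ‖μ‖) '' spectrum ℂ (M.map Complex.ofReal))

/-- The sequence `X_{k+1} = A X_k Aᵀ + C X_k Cᵀ + W` starting from `X₀`. -/
noncomputable def lyapSeq {n : ℕ} (A C W X0 : Matrix (Fin n) (Fin n) ℝ) :
    ℕ → Matrix (Fin n) (Fin n) ℝ
  | 0 => X0
  | k + 1 => A * lyapSeq A C W X0 k * Aᵀ + C * lyapSeq A C W X0 k * Cᵀ + W

namespace LyapAux

variable {n : ℕ}

/-- The Lyapunov operator. -/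
def Lop (A C : Matrix (Fin n) (Fin n) ℝ) (X : Matrix (Fin n) (Fin n) ℝ) :
    Matrix (Fin n) (Fin n) ℝ := A * X * Aᵀ + C * X * Cᵀ

lemma Lop_add (A C X Y : Matrix (Fin n) (Fin n) ℝ) :
    Lop A C (X + Y) = Lop A C X + Lop A C Y := by
  simp [Lop, mul_add, add_mul]; abel

lemma Lop_sum {ι : Type*} (A C : Matrix (Fin n) (Fin n) ℝ) (s : Finset ι)
    (f : ι → Matrix (Fin n) (Fin n) ℝ) :
    Lop A C (∑ j ∈ s, f j) = ∑ j ∈ s, Lop A C (f j) := by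
  simp [Lop, Finset.mul_sum, Finset.sum_mul, Finset.sum_add_distrib]

lemma Lop_posSemidef {A C X : Matrix (Fin n) (Fin n) ℝ} (hX : X.PosSemidef) :
    (Lop A C X).PosSemidef := by
  have hA := hX.mul_mul_conjTranspose_same A
  have hC := hX.mul_mul_conjTranspose_same C
  simp only [conjTranspose_eq_transpose_of_trivial] at hA hC
  exact hA.add hC

lemma Lop_iter_posSemidef {A C X : Matrix (Fin n) (Fin n) ℝ} (hX : X.PosSemidef) (k : ℕ) :
    ((Lop A C)^[k] X).PosSemidef := by
  induction k with
  | zero => exact hX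
  | succ k ih => rw [Function.iterate_succ_apply']; exact Lop_posSemidef ih

lemma lyapSeq_succ (A C W X0 : Matrix (Fin n) (Fin n) ℝ) (k : ℕ) :
    lyapSeq A C W X0 (k + 1) = Lop A C (lyapSeq A C W X0 k) + W := rfl

lemma lyapSeq_eq (A C W X0 : Matrix (Fin n) (Fin n) ℝ) (k : ℕ) :
    lyapSeq A C W X0 k = (Lop A C)^[k] X0 + lyapSeq A C W 0 k := by
  induction k with
  | zero => simp [lyapSeq]
  | succ k ih =>
      rw [lyapSeq_succ, lyapSeq_succ, ih, Lop_add, Function.iterate_succ_apply']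
      abel

lemma lyapSeq_zero_eq (A C W : Matrix (Fin n) (Fin n) ℝ) (k : ℕ) :
    lyapSeq A C W 0 k = ∑ j ∈ Finset.range k, (Lop A C)^[j] W := by
  induction k with
  | zero => simp [lyapSeq]
  | succ k ih =>
      rw [lyapSeq_succ, ih, Finset.sum_range_succ', Lop_sum]
      simp [← Function.iterate_succ_apply']

lemma lyapSeq_posSemidef {A C W X0 : Matrix (Fin n) (Fin n) ℝ} (hW : W.PosSemidef)
    (hX0 : X0.PosSemidef) (k : ℕ) : (lyapSeq A C W X0 k).PosSemidef := by
  induction k with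
  | zero => exact hX0
  | succ k ih => rw [lyapSeq_succ]; exact (Lop_posSemidef ih).add hW

/-- Vectorization. -/
def vecM (X : Matrix (Fin n) (Fin n) ℝ) : Fin n × Fin n → ℝ := fun p => X p.1 p.2

lemma vec_Lop (A C X : Matrix (Fin n) (Fin n) ℝ) :
    vecM (Lop A C X) = (A ⊗ₖ A + C ⊗ₖ C) *ᵥ vecM X := by
  funext p
  obtain ⟨i, j⟩ := p
  simp only [vecM, Lop, mulVec, dotProduct, Matrix.add_apply, kroneckerMap_apply,
    Fintype.sum_prod_type, mul_apply, transpose_apply, Finset.sum_mul, Finset.mul_sum,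
    add_mul, Finset.sum_add_distrib]
  congr 1 <;>
  · rw [Finset.sum_comm]
    exact Finset.sum_congr rfl fun k _ => Finset.sum_congr rfl fun l _ => by ring

lemma vec_Lop_iter (A C X : Matrix (Fin n) (Fin n) ℝ) (k : ℕ) :
    vecM ((Lop A C)^[k] X) = ((A ⊗ₖ A + C ⊗ₖ C) ^ k) *ᵥ vecM X := by
  induction k with
  | zero => simp
  | succ k ih =>
      rw [Function.iterate_succ_apply', vec_Lop, ih, mulVec_mulVec, ← pow_succ']

/-- entrywise tendsto iff matrix tendsto -/
lemma tendsto_matrix_iff {f : ℕ → Matrix (Fin n) (Fin n) ℝ} {M : Matrix (Fin n) (Fin n) ℝ} :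
    Tendsto f atTop (𝓝 M) ↔ ∀ i j, Tendsto (fun k => f k i j) atTop (𝓝 (M i j)) := by
  constructor
  · intro h i j
    exact (((continuous_apply j).comp (continuous_apply i)).tendsto M).comp h
  · intro h
    apply tendsto_pi_nhds.mpr
    intro i
    rw [tendsto_pi_nhds]
    exact h i

lemma tendsto_dot {f : ℕ → Matrix (Fin n) (Fin n) ℝ} {M : Matrix (Fin n) (Fin n) ℝ}
    (h : ∀ i j, Tendsto (fun k => f k i j) atTop (𝓝 (M i j))) (x y : Fin n → ℝ) :
    Tendsto (fun k => x ⬝ᵥ (f k *ᵥ y)) atTop (𝓝 (x ⬝ᵥ (M *ᵥ y))) := by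
  have : ∀ (N : Matrix (Fin n) (Fin n) ℝ), x ⬝ᵥ (N *ᵥ y) = ∑ i, ∑ j, x i * (N i j * y j) := by
    intro N; simp [dotProduct, mulVec, Finset.mul_sum]
  simp only [this]
  exact tendsto_finset_sum _ fun i _ => tendsto_finset_sum _ fun j _ =>
    ((h i j).mul_const (y j)).const_mul (x i)

section Complexify
attribute [local instance] Matrix.linftyOpNormedRing Matrix.linftyOpNormedAlgebra

variable {N : Type*} [Fintype N] [DecidableEq N]

lemma entry_nnnorm_le (M : Matrix N N ℂ) (i j : N) : ‖M i j‖₊ ≤ ‖M‖₊ := by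
  rw [Matrix.linfty_opNNNorm_def]
  exact le_trans
    (Finset.single_le_sum (f := fun j => ‖M i j‖₊) (fun _ _ => zero_le) (Finset.mem_univ j))
    (Finset.le_sup (f := fun i => ∑ j, ‖M i j‖₊) (Finset.mem_univ i))

lemma specRad_nonneg (M : Matrix N N ℝ) : 0 ≤ specRad M := by
  unfold specRad
  rcases ((fun μ : ℂ => ‖μ‖) '' spectrum ℂ (M.map Complex.ofReal)).eq_empty_or_nonempty with h | h
  · rw [h, Real.sSup_empty]
  · obtain ⟨x, ⟨μ, hμ, rfl⟩⟩ := h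
    exact le_trans (norm_nonneg μ) (le_csSup (((Matrix.finite_spectrum _).image _).bddAbove)
      ⟨μ, hμ, rfl⟩)

lemma pow_entry_bound (M : Matrix N N ℝ) (h : specRad M < 1) :
    ∃ c r : ℝ, 0 ≤ c ∧ 0 ≤ r ∧ r < 1 ∧ ∀ k i j, |(M ^ k) i j| ≤ c * r ^ k := by
  classical
  set 𝕄 : Matrix N N ℂ := M.map Complex.ofReal with h𝕄
  set r : ℝ := (specRad M + 1) / 2 with hr
  have hs0 : 0 ≤ specRad M := specRad_nonneg M
  have hr0 : 0 < r := by positivity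
  have hr1 : r < 1 := by rw [hr]; linarith
  have hsr : specRad M < r := by rw [hr]; linarith
  have hspec : spectralRadius ℂ 𝕄 < ENNReal.ofReal r := by
    have hle : spectralRadius ℂ 𝕄 ≤ ENNReal.ofReal (specRad M) := by
      rw [spectralRadius]
      refine iSup₂_le fun μ hμ => ?_
      rw [← ENNReal.ofReal_coe_nnreal (p := ‖μ‖₊), coe_nnnorm]
      exact ENNReal.ofReal_le_ofReal
        (le_csSup (((Matrix.finite_spectrum _).image _).bddAbove) ⟨μ, hμ, rfl⟩)
    exact lt_of_le_of_lt hle ((ENNReal.ofReal_lt_ofReal_iff hr0).mpr hsr)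
  have hG := spectrum.pow_nnnorm_pow_one_div_tendsto_nhds_spectralRadius 𝕄
  have hev : ∀ᶠ k : ℕ in atTop, (‖𝕄 ^ k‖₊ : ℝ≥0∞) ^ (1 / (k : ℝ)) < ENNReal.ofReal r :=
    hG.eventually_lt_const hspec
  obtain ⟨K0, hK0⟩ := eventually_atTop.mp hev
  set K := max K0 1 with hK
  have hbig : ∀ k, K ≤ k → ‖𝕄 ^ k‖ ≤ r ^ k := by
    intro k hk
    have hk1 : 1 ≤ k := le_trans (le_max_right _ _) hk
    have hkR : (0:ℝ) < (k:ℝ) := by exact_mod_cast hk1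
    have h1 := hK0 k (le_trans (le_max_left _ _) hk)
    have h2 : (((‖𝕄 ^ k‖₊ : ℝ≥0∞) ^ (1 / (k:ℝ))) ^ (k:ℝ)) < (ENNReal.ofReal r) ^ (k:ℝ) :=
      ENNReal.rpow_lt_rpow h1 hkR
    rw [← ENNReal.rpow_mul, one_div_mul_cancel (ne_of_gt hkR), ENNReal.rpow_one] at h2
    rw [ENNReal.ofReal_rpow_of_pos hr0] at h2
    have h3 : ‖𝕄 ^ k‖ < r ^ (k : ℝ) := by
      rw [← ENNReal.ofReal_coe_nnreal (p := ‖𝕄 ^ k‖₊), coe_nnnorm] at h2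
      exact (ENNReal.ofReal_lt_ofReal_iff (by positivity)).mp h2
    rw [Real.rpow_natCast] at h3
    exact le_of_lt h3
  set c : ℝ := 1 + ∑ k ∈ Finset.range K, ‖𝕄 ^ k‖ / r ^ k with hc
  have hc1 : 1 ≤ c := by
    rw [hc]
    have : 0 ≤ ∑ k ∈ Finset.range K, ‖𝕄 ^ k‖ / r ^ k :=
      Finset.sum_nonneg fun k _ => by positivity
    linarith
  refine ⟨c, r, by linarith, le_of_lt hr0, hr1, fun k i j => ?_⟩
  have hentry : |(M ^ k) i j| ≤ ‖𝕄 ^ k‖ := by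
    have hmap : 𝕄 ^ k = (M ^ k).map Complex.ofReal := by
      show (Complex.ofRealHom.mapMatrix M) ^ k = Complex.ofRealHom.mapMatrix (M ^ k)
      rw [map_pow]
    have h2 : ‖(𝕄 ^ k) i j‖ ≤ ‖𝕄 ^ k‖ := entry_nnnorm_le _ i j
    have h3 : (𝕄 ^ k) i j = Complex.ofReal ((M ^ k) i j) := by rw [hmap]; rfl
    rwa [h3, Complex.norm_real] at h2
  rcases le_or_gt K k with hk | hk
  · exact le_trans hentry (le_trans (hbig k hk) (le_mul_of_one_le_left (by positivity) hc1))
  · have hterm : ‖𝕄 ^ k‖ / r ^ k ≤ c := by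
      rw [hc]
      have := Finset.single_le_sum (f := fun k => ‖𝕄 ^ k‖ / r ^ k)
        (fun m _ => by positivity) (Finset.mem_range.mpr hk)
      linarith
    have : ‖𝕄 ^ k‖ ≤ c * r ^ k := by
      rw [div_le_iff₀ (by positivity)] at hterm
      exact hterm
    exact le_trans hentry this

lemma specRad_lt_one_of_pow_tendsto (M : Matrix N N ℝ)
    (h : ∀ i j, Tendsto (fun k => (M ^ k) i j) atTop (𝓝 0)) : specRad M < 1 := by
  classical
  have key : ∀ μ ∈ spectrum ℂ (M.map Complex.ofReal), ‖μ‖ < 1 := by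
    intro μ hμ
    rw [spectrum.mem_iff] at hμ
    have hdet : ((algebraMap ℂ (Matrix N N ℂ)) μ - M.map Complex.ofReal).det = 0 := by
      by_contra hd
      exact hμ ((Matrix.isUnit_iff_isUnit_det _).mpr (Ne.isUnit hd))
    obtain ⟨v, hv0, hv⟩ := (Matrix.exists_mulVec_eq_zero_iff).mpr hdet
    have heig : (M.map Complex.ofReal) *ᵥ v = μ • v := by
      rw [Matrix.sub_mulVec, Algebra.algebraMap_eq_smul_one, smul_mulVec,
        one_mulVec, sub_eq_zero] at hv
      exact hv.symm
    have hiter : ∀ k : ℕ, (M.map Complex.ofReal) ^ k *ᵥ v = μ ^ k • v := by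
      intro k
      induction k with
      | zero => simp
      | succ k ih =>
          rw [pow_succ, ← mulVec_mulVec, heig, mulVec_smul, ih, smul_smul, pow_succ]
          ring_nf
    obtain ⟨p, hp⟩ := Function.ne_iff.mp hv0
    have hmap : ∀ k : ℕ, (M.map Complex.ofReal) ^ k = (M ^ k).map Complex.ofReal := by
      intro k
      show (Complex.ofRealHom.mapMatrix M) ^ k = Complex.ofRealHom.mapMatrix (M ^ k)
      rw [map_pow]
    have htend0 : Tendsto (fun k => ((M.map Complex.ofReal) ^ k *ᵥ v) p) atTop (𝓝 0) := by
      have : ∀ k, ((M.map Complex.ofReal) ^ k *ᵥ v) p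
          = ∑ q, Complex.ofReal ((M ^ k) p q) * v q := by
        intro k
        rw [hmap k]
        simp [mulVec, dotProduct, Matrix.map_apply]
      simp only [this]
      have : Tendsto (fun k => ∑ q, Complex.ofReal ((M ^ k) p q) * v q) atTop
          (𝓝 (∑ q : N, 0 * v q)) := by
        refine tendsto_finset_sum _ fun q _ => Tendsto.mul_const (v q) ?_
        exact (Complex.continuous_ofReal.tendsto 0).comp (h p q)
      simpa using this
    have htend : Tendsto (fun k : ℕ => μ ^ k) atTop (𝓝 0) := by
      simp only [hiter] at htend0
      have hvp : v p ≠ 0 := hp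
      have := htend0.mul_const (v p)⁻¹
      simp only [Pi.smul_apply, smul_eq_mul, zero_mul, mul_assoc,
        mul_inv_cancel₀ hvp, mul_one] at this
      exact this
    by_contra h1
    push_neg at h1
    have hge : ∀ k : ℕ, (1:ℝ) ≤ ‖μ ^ k‖ := fun k => by
      rw [norm_pow]; exact one_le_pow₀ h1
    have hlt : ∀ᶠ k : ℕ in atTop, ‖μ ^ k‖ < 1 := by
      have hn : Tendsto (fun k : ℕ => ‖μ ^ k‖) atTop (𝓝 0) := by simpa using htend.norm
      exact hn.eventually_lt_const (by norm_num)
    obtain ⟨k, hk⟩ := hlt.exists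
    exact absurd (hge k) (not_le.mpr hk)
  unfold specRad
  rcases ((fun μ : ℂ => ‖μ‖) '' spectrum ℂ (M.map Complex.ofReal)).eq_empty_or_nonempty with
    hS | hS
  · rw [hS, Real.sSup_empty]; norm_num
  · rw [Set.Finite.csSup_lt_iff (((Matrix.finite_spectrum _).image _)) hS]
    rintro x ⟨μ, hμ, rfl⟩
    exact key μ hμ

end Complexify

lemma sqrt_cs {a b c d : ℝ} (ha : 0 ≤ a) (hb : 0 ≤ b) (hc : 0 ≤ c) (hd : 0 ≤ d) :
    Real.sqrt a * Real.sqrt b + Real.sqrt c * Real.sqrt d ≤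
      Real.sqrt (a + c) * Real.sqrt (b + d) := by
  have key : (Real.sqrt a * Real.sqrt b + Real.sqrt c * Real.sqrt d) ^ 2 ≤ (a + c) * (b + d) := by
    nlinarith [sq_nonneg (Real.sqrt a * Real.sqrt d - Real.sqrt c * Real.sqrt b),
      Real.sq_sqrt ha, Real.sq_sqrt hb, Real.sq_sqrt hc, Real.sq_sqrt hd,
      Real.sqrt_nonneg a, Real.sqrt_nonneg b, Real.sqrt_nonneg c, Real.sqrt_nonneg d]
  have h0 : 0 ≤ Real.sqrt a * Real.sqrt b + Real.sqrt c * Real.sqrt d := by positivity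
  calc Real.sqrt a * Real.sqrt b + Real.sqrt c * Real.sqrt d
      = Real.sqrt ((Real.sqrt a * Real.sqrt b + Real.sqrt c * Real.sqrt d) ^ 2) :=
        (Real.sqrt_sq h0).symm
    _ ≤ Real.sqrt ((a + c) * (b + d)) := Real.sqrt_le_sqrt key
    _ = Real.sqrt (a + c) * Real.sqrt (b + d) := Real.sqrt_mul (by linarith) _

lemma dot_Lop (A C M : Matrix (Fin n) (Fin n) ℝ) (x y : Fin n → ℝ) :
    x ⬝ᵥ (Lop A C M *ᵥ y) =
      (Aᵀ *ᵥ x) ⬝ᵥ (M *ᵥ (Aᵀ *ᵥ y)) + (Cᵀ *ᵥ x) ⬝ᵥ (M *ᵥ (Cᵀ *ᵥ y)) := by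
  simp only [Lop, add_mulVec, dotProduct_add, ← mulVec_mulVec]
  rw [dotProduct_mulVec x A, dotProduct_mulVec x C]
  simp [mulVec_transpose]

lemma abs_dot_le (X : Matrix (Fin n) (Fin n) ℝ) (u v : Fin n → ℝ) :
    |u ⬝ᵥ (X *ᵥ v)| ≤ (∑ i, ∑ j, |X i j|) * Real.sqrt (u ⬝ᵥ u) * Real.sqrt (v ⬝ᵥ v) := by
  have hcoord : ∀ (w : Fin n → ℝ) i, |w i| ≤ Real.sqrt (w ⬝ᵥ w) := by
    intro w i
    rw [← Real.sqrt_sq_eq_abs]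
    apply Real.sqrt_le_sqrt
    rw [dotProduct]
    calc w i ^ 2 = w i * w i := sq (w i) ▸ by ring
      _ ≤ ∑ j, w j * w j :=
        Finset.single_le_sum (f := fun j => w j * w j) (fun j _ => mul_self_nonneg _)
          (Finset.mem_univ i)
  calc |u ⬝ᵥ (X *ᵥ v)| = |∑ i, ∑ j, u i * (X i j * v j)| := by
        simp [dotProduct, mulVec, Finset.mul_sum]
    _ ≤ ∑ i, ∑ j, |u i * (X i j * v j)| := by
        refine le_trans (Finset.abs_sum_le_sum_abs _ _) ?_
        exact Finset.sum_le_sum fun i _ => Finset.abs_sum_le_sum_abs _ _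
    _ ≤ ∑ i, ∑ j, |X i j| * (Real.sqrt (u ⬝ᵥ u) * Real.sqrt (v ⬝ᵥ v)) := by
        refine Finset.sum_le_sum fun i _ => Finset.sum_le_sum fun j _ => ?_
        rw [abs_mul, abs_mul]
        calc |u i| * (|X i j| * |v j|) = |X i j| * (|u i| * |v j|) := by ring
          _ ≤ |X i j| * (Real.sqrt (u ⬝ᵥ u) * Real.sqrt (v ⬝ᵥ v)) := by
              refine mul_le_mul_of_nonneg_left ?_ (abs_nonneg _)
              exact mul_le_mul (hcoord u i) (hcoord v j) (abs_nonneg _) (Real.sqrt_nonneg _)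
    _ = (∑ i, ∑ j, |X i j|) * Real.sqrt (u ⬝ᵥ u) * Real.sqrt (v ⬝ᵥ v) := by
        simp [Finset.sum_mul, mul_assoc]

lemma cs_iter (A C X : Matrix (Fin n) (Fin n) ℝ) (c : ℝ) (hc0 : 0 ≤ c)
    (hc : ∀ u v : Fin n → ℝ, |u ⬝ᵥ (X *ᵥ v)| ≤ c * Real.sqrt (u ⬝ᵥ u) * Real.sqrt (v ⬝ᵥ v)) :
    ∀ (k : ℕ) (x y : Fin n → ℝ), |x ⬝ᵥ ((Lop A C)^[k] X *ᵥ y)| ≤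
      c * Real.sqrt (x ⬝ᵥ ((Lop A C)^[k] 1 *ᵥ x)) *
        Real.sqrt (y ⬝ᵥ ((Lop A C)^[k] 1 *ᵥ y)) := by
  intro k
  induction k with
  | zero => intro x y; simpa [one_mulVec] using hc x y
  | succ k ih =>
      intro x y
      have epos : ∀ z : Fin n → ℝ, 0 ≤ z ⬝ᵥ ((Lop A C)^[k] 1 *ᵥ z) := by
        intro z
        have h1 : 0 ≤ star z ⬝ᵥ ((Lop A C)^[k] (1 : Matrix (Fin n) (Fin n) ℝ) *ᵥ z) :=
          (Lop_iter_posSemidef Matrix.PosSemidef.one k).dotProduct_mulVec_nonneg z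
        simpa using h1
      rw [Function.iterate_succ_apply', Function.iterate_succ_apply', dot_Lop, dot_Lop, dot_Lop]
      calc |(Aᵀ *ᵥ x) ⬝ᵥ ((Lop A C)^[k] X *ᵥ (Aᵀ *ᵥ y)) +
            (Cᵀ *ᵥ x) ⬝ᵥ ((Lop A C)^[k] X *ᵥ (Cᵀ *ᵥ y))|
          ≤ |(Aᵀ *ᵥ x) ⬝ᵥ ((Lop A C)^[k] X *ᵥ (Aᵀ *ᵥ y))| +
            |(Cᵀ *ᵥ x) ⬝ᵥ ((Lop A C)^[k] X *ᵥ (Cᵀ *ᵥ y))| := abs_add_le _ _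
        _ ≤ c * Real.sqrt ((Aᵀ *ᵥ x) ⬝ᵥ ((Lop A C)^[k] 1 *ᵥ (Aᵀ *ᵥ x))) *
              Real.sqrt ((Aᵀ *ᵥ y) ⬝ᵥ ((Lop A C)^[k] 1 *ᵥ (Aᵀ *ᵥ y))) +
            c * Real.sqrt ((Cᵀ *ᵥ x) ⬝ᵥ ((Lop A C)^[k] 1 *ᵥ (Cᵀ *ᵥ x))) *
              Real.sqrt ((Cᵀ *ᵥ y) ⬝ᵥ ((Lop A C)^[k] 1 *ᵥ (Cᵀ *ᵥ y))) :=
            add_le_add (ih _ _) (ih _ _)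
        _ ≤ c * Real.sqrt ((Aᵀ *ᵥ x) ⬝ᵥ ((Lop A C)^[k] 1 *ᵥ (Aᵀ *ᵥ x)) +
                (Cᵀ *ᵥ x) ⬝ᵥ ((Lop A C)^[k] 1 *ᵥ (Cᵀ *ᵥ x))) *
              Real.sqrt ((Aᵀ *ᵥ y) ⬝ᵥ ((Lop A C)^[k] 1 *ᵥ (Aᵀ *ᵥ y)) +
                (Cᵀ *ᵥ y) ⬝ᵥ ((Lop A C)^[k] 1 *ᵥ (Cᵀ *ᵥ y))) := by
            rw [mul_assoc, mul_assoc, mul_assoc, ← mul_add]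
            exact mul_le_mul_of_nonneg_left
              (sqrt_cs (epos _) (epos _) (epos _) (epos _)) hc0

end LyapAux

theorem stmt0 {n : ℕ} (A C W : Matrix (Fin n) (Fin n) ℝ) (hW : W.PosSemidef) :
    (∃ X : Matrix (Fin n) (Fin n) ℝ, X.PosSemidef ∧
      ∀ X0 : Matrix (Fin n) (Fin n) ℝ, X0.PosSemidef →
        Tendsto (lyapSeq A C W X0) atTop (𝓝 X)) ↔
    specRad (A ⊗ₖ A + C ⊗ₖ C) < 1 := by
  classical
  open LyapAux in
  set T : Matrix (Fin n × Fin n) (Fin n × Fin n) ℝ := A ⊗ₖ A + C ⊗ₖ C with hT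
  constructor
  · rintro ⟨X, hX, hconv⟩
    -- Step 1: (Lop A C)^[k] 1 → 0 entrywise
    have h1 : ∀ i j, Tendsto (fun k => ((Lop A C)^[k] (1 : Matrix (Fin n) (Fin n) ℝ)) i j)
        atTop (𝓝 0) := by
      intro i j
      have t1 := (tendsto_matrix_iff).mp (hconv 1 Matrix.PosSemidef.one) i j
      have t0 := (tendsto_matrix_iff).mp (hconv 0 Matrix.PosSemidef.zero) i j
      have := t1.sub t0
      rw [sub_self] at this
      refine this.congr fun k => ?_
      rw [lyapSeq_eq A C W 1 k]
      simp [Matrix.add_apply]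
    -- Step 2: quadratic forms of (Lop A C)^[k] 1 tend to 0
    have h2 : ∀ x : Fin n → ℝ,
        Tendsto (fun k => x ⬝ᵥ ((Lop A C)^[k] (1 : Matrix (Fin n) (Fin n) ℝ) *ᵥ x))
          atTop (𝓝 0) := by
      intro x
      have := tendsto_dot (M := (0 : Matrix (Fin n) (Fin n) ℝ)) (f := fun k => (Lop A C)^[k] 1)
        (by simpa using h1) x x
      simpa using this
    -- Step 3: all entries of (Lop A C)^[k] Y tend to 0
    have h3 : ∀ (Y : Matrix (Fin n) (Fin n) ℝ) i j,
        Tendsto (fun k => ((Lop A C)^[k] Y) i j) atTop (𝓝 0) := by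
      intro Y i j
      set c : ℝ := ∑ i, ∑ j, |Y i j| with hcY
      have hc0 : 0 ≤ c := Finset.sum_nonneg fun i _ => Finset.sum_nonneg fun j _ => abs_nonneg _
      have hcs := cs_iter A C Y c hc0 (fun u v => abs_dot_le Y u v)
      have hentry : ∀ (M : Matrix (Fin n) (Fin n) ℝ),
          (Pi.single i 1 : Fin n → ℝ) ⬝ᵥ (M *ᵥ (Pi.single j 1 : Fin n → ℝ)) = M i j := by
        intro M
        rw [mulVec_single, single_dotProduct]
        simp
      have hb : ∀ k, ‖((Lop A C)^[k] Y) i j‖ ≤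
          c * Real.sqrt ((Pi.single i 1 : Fin n → ℝ) ⬝ᵥ
              ((Lop A C)^[k] 1 *ᵥ (Pi.single i 1 : Fin n → ℝ))) *
            Real.sqrt ((Pi.single j 1 : Fin n → ℝ) ⬝ᵥ
              ((Lop A C)^[k] 1 *ᵥ (Pi.single j 1 : Fin n → ℝ))) := by
        intro k
        rw [Real.norm_eq_abs, ← hentry ((Lop A C)^[k] Y)]
        exact hcs k _ _
      refine squeeze_zero_norm hb ?_
      have hs : Tendsto (fun k => Real.sqrt ((Pi.single i 1 : Fin n → ℝ) ⬝ᵥ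
          ((Lop A C)^[k] 1 *ᵥ (Pi.single i 1 : Fin n → ℝ)))) atTop (𝓝 0) := by
        have := (Real.continuous_sqrt.tendsto 0).comp (h2 (Pi.single i 1))
        simpa [Function.comp_def] using this
      have hs' : Tendsto (fun k => Real.sqrt ((Pi.single j 1 : Fin n → ℝ) ⬝ᵥ
          ((Lop A C)^[k] 1 *ᵥ (Pi.single j 1 : Fin n → ℝ)))) atTop (𝓝 0) := by
        have := (Real.continuous_sqrt.tendsto 0).comp (h2 (Pi.single j 1))
        simpa [Function.comp_def] using this
      have := ((hs.const_mul c).mul hs')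
      simpa using this
    -- Step 4: entries of T ^ k tend to 0
    have h4 : ∀ p q : Fin n × Fin n, Tendsto (fun k => (T ^ k) p q) atTop (𝓝 0) := by
      intro p q
      have hE : vecM (Matrix.single q.1 q.2 (1:ℝ)) = Pi.single q 1 := by
        funext p'
        rcases p' with ⟨a, b⟩
        simp only [vecM, Matrix.single, Matrix.of_apply, Pi.single_apply]
        by_cases h1 : q.1 = a <;> by_cases h2 : q.2 = b <;>
          simp [h1, h2, Prod.ext_iff, eq_comm]
      have hk : ∀ k, (T ^ k) p q =
          ((Lop A C)^[k] (Matrix.single q.1 q.2 (1:ℝ))) p.1 p.2 := by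
        intro k
        have hv := congrFun (vec_Lop_iter A C (Matrix.single q.1 q.2 (1:ℝ)) k) p
        rw [hE, mulVec_single] at hv
        simpa [vecM] using hv.symm
      exact (h3 _ p.1 p.2).congr fun k => (hk k).symm
    exact specRad_lt_one_of_pow_tendsto T h4
  · intro h
    obtain ⟨c, r, hc0, hr0, hr1, hb⟩ := pow_entry_bound T h
    have key : ∀ (Y : Matrix (Fin n) (Fin n) ℝ) (j : ℕ) (i i' : Fin n),
        |((Lop A C)^[j] Y) i i'| ≤ (c * ∑ q, |vecM Y q|) * r ^ j := by
      intro Y j i i'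
      have hv := congrFun (vec_Lop_iter A C Y j) (i, i')
      have hrep : ((Lop A C)^[j] Y) i i' = ∑ q, (T ^ j) (i, i') q * vecM Y q := by
        simpa [vecM, mulVec, dotProduct] using hv
      rw [hrep]
      calc |∑ q, (T ^ j) (i, i') q * vecM Y q|
          ≤ ∑ q, |(T ^ j) (i, i') q * vecM Y q| := Finset.abs_sum_le_sum_abs _ _
        _ ≤ ∑ q, c * r ^ j * |vecM Y q| := by
            refine Finset.sum_le_sum fun q _ => ?_
            rw [abs_mul]
            exact mul_le_mul_of_nonneg_right (hb j (i, i') q) (abs_nonneg _)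
        _ = (c * ∑ q, |vecM Y q|) * r ^ j := by
            rw [Finset.mul_sum, Finset.sum_mul]
            exact Finset.sum_congr rfl fun q _ => by ring
    have hgeom : Summable (fun j : ℕ => (c * ∑ q, |vecM W q|) * r ^ j) :=
      (summable_geometric_of_lt_one hr0 hr1).mul_left _
    have hsum : ∀ i i', Summable (fun j => ((Lop A C)^[j] W) i i') := fun i i' =>
      Summable.of_norm_bounded hgeom fun j => by
        simpa [Real.norm_eq_abs] using key W j i i'
    set X : Matrix (Fin n) (Fin n) ℝ :=
      Matrix.of (fun i i' => ∑' j : ℕ, ((Lop A C)^[j] W) i i') with hXdef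
    have hXapp : ∀ i i', X i i' = ∑' j : ℕ, ((Lop A C)^[j] W) i i' := fun _ _ => rfl
    have hpartial : ∀ i i',
        Tendsto (fun k => ∑ j ∈ Finset.range k, ((Lop A C)^[j] W) i i')
          atTop (𝓝 (X i i')) := fun i i' => (hsum i i').hasSum.tendsto_sum_nat
    have h0conv : ∀ i i',
        Tendsto (fun k => lyapSeq A C W 0 k i i') atTop (𝓝 (X i i')) := by
      intro i i'
      refine (hpartial i i').congr fun k => ?_
      rw [lyapSeq_zero_eq, Matrix.sum_apply]
    have hXpsd : X.PosSemidef := by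
      refine Matrix.PosSemidef.of_dotProduct_mulVec_nonneg ?_ ?_
      · refine Matrix.IsHermitian.ext fun i i' => ?_
        rw [star_trivial, hXapp, hXapp]
        exact tsum_congr fun j => by
          simpa using (Lop_iter_posSemidef hW j).1.apply i i'
      · intro x
        have hsx : star x = x := by funext i; simp
        rw [hsx]
        have hq : Tendsto (fun k => x ⬝ᵥ (lyapSeq A C W 0 k *ᵥ x))
            atTop (𝓝 (x ⬝ᵥ (X *ᵥ x))) := tendsto_dot h0conv x x
        refine ge_of_tendsto' hq fun k => ?_
        have hps : 0 ≤ star x ⬝ᵥ (lyapSeq A C W 0 k *ᵥ x) :=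
          (lyapSeq_posSemidef hW Matrix.PosSemidef.zero k).dotProduct_mulVec_nonneg x
        rwa [hsx] at hps
    refine ⟨X, hXpsd, fun X0 hX0 => ?_⟩
    rw [tendsto_matrix_iff]
    intro i i'
    have hiter0 : Tendsto (fun k => ((Lop A C)^[k] X0) i i') atTop (𝓝 0) := by
      refine squeeze_zero_norm
        (fun k => by simpa [Real.norm_eq_abs] using key X0 k i i') ?_
      simpa using
        (tendsto_pow_atTop_nhds_zero_of_lt_one hr0 hr1).const_mul (c * ∑ q, |vecM X0 q|)
    have hadd := hiter0.add (h0conv i i')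
    rw [zero_add] at hadd
    refine hadd.congr fun k => ?_
    rw [lyapSeq_eq A C W X0 k]
    simp [Matrix.add_apply]
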